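/- Azuma-type estimate for the canonical ensemble (equation (2BEstimate5) in the proof of Proposition 4.6): there exists a universal constant C > 0 such that for every finite index set I, every integer ℓ ≥ 1, every choice of 2ℓ pairwise distinct elements a₁, …, a_ℓ, b₁, …, b_ℓ ∈ I, and every integer k with |k| ≤ |I|, k ≡ |I| (mod 2) (so that the slice below is nonempty), the canonical ensemble μ_k satisfies E_{μ_k}[ | (1/ℓ)·Σ_{j=1}^{ℓ} (η(a_j) − η(b_j)) | ] ≤ C · ℓ^(−1/2). -/

import Mathlib

/-- The spin value (`±1` as a real number) of a configuration `η : α → Bool` at site `i`. -/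
def spin {α : Type} (η : α → Bool) (i : α) : ℝ := if η i then 1 else -1

lemma spin_swap {α : Type} [DecidableEq α] (η : α → Bool) (x y i : α) :
    spin (fun j => η (Equiv.swap x y j)) i = spin η (Equiv.swap x y i) := rfl

/-- The slice is nonempty under the parity and bound assumptions. -/
lemma slice_nonempty {α : Type} [Fintype α] [DecidableEq α]
    (k : ℤ) (hk : |k| ≤ (Fintype.card α : ℤ))
    (hpar : k % 2 = (Fintype.card α : ℤ) % 2) :
    (Finset.univ.filter (fun η : α → Bool =>
      (∑ i : α, (if η i then (1 : ℤ) else -1)) = k)).Nonempty := by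
  classical
  set n := Fintype.card α with hn
  rw [abs_le] at hk
  obtain ⟨t, ht⟩ : ∃ t : ℕ, (t : ℤ) = (k + n) / 2 := by
    refine ⟨((k + n) / 2).toNat, Int.toNat_of_nonneg ?_⟩
    omega
  have h2t : 2 * (t : ℤ) = k + n := by omega
  have htn : t ≤ n := by omega
  obtain ⟨e⟩ : Nonempty (α ≃ Fin n) := ⟨(Fintype.equivFin α)⟩
  refine ⟨fun i => decide ((e i : ℕ) < t), Finset.mem_filter.2 ⟨Finset.mem_univ _, ?_⟩⟩
  have step1 : (∑ i : α, (if decide ((e i : ℕ) < t) = true then (1 : ℤ) else -1)) =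
      ∑ m : Fin n, (if (m : ℕ) < t then (1 : ℤ) else -1) := by
    rw [← Equiv.sum_comp e (fun m : Fin n => if (m : ℕ) < t then (1 : ℤ) else -1)]
    simp
  rw [step1, Fin.sum_univ_eq_sum_range (fun m => if m < t then (1 : ℤ) else -1)]
  have hsplit : Finset.range n = Finset.range t ∪ Finset.Ico t n := by
    rw [Finset.range_eq_Ico, Finset.range_eq_Ico]
    exact (Finset.Ico_union_Ico_eq_Ico (Nat.zero_le t) htn).symm
  have hdisj : Disjoint (Finset.range t) (Finset.Ico t n) := by
    refine Finset.disjoint_left.2 fun m hm hm' => ?_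
    have h1 := Finset.mem_range.1 hm
    have h2 := (Finset.mem_Ico.1 hm').1
    omega
  rw [hsplit, Finset.sum_union hdisj]
  have h1 : ∑ m ∈ Finset.range t, (if m < t then (1 : ℤ) else -1) = t := by
    rw [Finset.sum_congr rfl (g := fun _ => (1 : ℤ))
      (fun m hm => if_pos (Finset.mem_range.1 hm))]
    simp
  have h2 : ∑ m ∈ Finset.Ico t n, (if m < t then (1 : ℤ) else -1) = -((n : ℤ) - t) := by
    rw [Finset.sum_congr rfl (g := fun _ => (-1 : ℤ))
      (fun m hm => if_neg (Nat.not_lt.2 (Finset.mem_Ico.1 hm).1))]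
    rw [Finset.sum_const, Nat.card_Ico, nsmul_eq_mul]
    omega
  rw [h1, h2]
  omega

/-- Cancellation by the swap involution: the sum over the slice of
`(spin η x - spin η y) * spin η c` vanishes when `c ∉ {x, y}`. -/
lemma swap_sum_zero {α : Type} [Fintype α] [DecidableEq α] (k : ℤ)
    (x y c : α) (hcx : c ≠ x) (hcy : c ≠ y) :
    ∑ η ∈ Finset.univ.filter (fun η : α → Bool =>
        (∑ i : α, (if η i then (1 : ℤ) else -1)) = k),
      (spin η x - spin η y) * spin η c = 0 := by
  classical
  refine Finset.sum_involution
    (fun η _ => fun j => η (Equiv.swap x y j)) ?_ ?_ ?_ ?_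
  · intro η hη
    have hx : spin (fun j => η (Equiv.swap x y j)) x = spin η y := by
      rw [spin_swap, Equiv.swap_apply_left]
    have hy : spin (fun j => η (Equiv.swap x y j)) y = spin η x := by
      rw [spin_swap, Equiv.swap_apply_right]
    have hc : spin (fun j => η (Equiv.swap x y j)) c = spin η c := by
      rw [spin_swap, Equiv.swap_apply_of_ne_of_ne hcx hcy]
    show (spin η x - spin η y) * spin η c +
      (spin (fun j => η (Equiv.swap x y j)) x - spin (fun j => η (Equiv.swap x y j)) y) *
        spin (fun j => η (Equiv.swap x y j)) c = 0
    rw [hx, hy, hc]; ring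
  · intro η hη hf heq
    have h1 : η (Equiv.swap x y x) = η x := congrFun heq x
    rw [Equiv.swap_apply_left] at h1
    apply hf
    have h2 : spin η x = spin η y := by unfold spin; rw [h1]
    show (spin η x - spin η y) * spin η c = 0
    rw [h2]; ring
  · intro η hη
    refine Finset.mem_filter.2 ⟨Finset.mem_univ _, ?_⟩
    have hη' := (Finset.mem_filter.1 hη).2
    show (∑ i : α, if η (Equiv.swap x y i) = true then (1 : ℤ) else -1) = k
    rw [Equiv.sum_comp (Equiv.swap x y) (fun i => if η i = true then (1 : ℤ) else -1)]
    exact hη'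
  · intro η hη
    funext j
    simp [Equiv.swap_apply_self]

theorem canonical_ensemble_azuma :
    ∃ C : ℝ, 0 < C ∧
      ∀ (α : Type) [Fintype α] [DecidableEq α],
      ∀ ℓ : ℕ, 1 ≤ ℓ →
      ∀ a b : Fin ℓ → α, Function.Injective (Sum.elim a b) →
      ∀ k : ℤ, |k| ≤ (Fintype.card α : ℤ) → k % 2 = (Fintype.card α : ℤ) % 2 →
        (((Finset.univ.filter
              (fun η : α → Bool =>
                (∑ i : α, (if η i then (1 : ℤ) else -1)) = k)).card : ℝ))⁻¹ *
          ∑ η ∈ Finset.univ.filter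
              (fun η : α → Bool =>
                (∑ i : α, (if η i then (1 : ℤ) else -1)) = k),
            |(ℓ : ℝ)⁻¹ * ∑ j : Fin ℓ, (spin η (a j) - spin η (b j))| ≤
          C * (ℓ : ℝ) ^ (-(1 : ℝ) / 2) := by
  classical
  refine ⟨2, by norm_num, ?_⟩
  intro α _ _ ℓ hℓ a b hinj k hk hpar
  set S := Finset.univ.filter (fun η : α → Bool =>
      (∑ i : α, (if η i then (1 : ℤ) else -1)) = k) with hS
  set N : ℝ := (S.card : ℝ) with hNdef
  have hSne : S.Nonempty := slice_nonempty k hk hpar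
  have hN : 0 < N := by
    simp only [hNdef]
    exact_mod_cast Finset.card_pos.2 hSne
  have hℓR : (0 : ℝ) < (ℓ : ℝ) := by exact_mod_cast hℓ
  set d : Fin ℓ → (α → Bool) → ℝ := fun j η => spin η (a j) - spin η (b j) with hd
  set Y : (α → Bool) → ℝ := fun η => ∑ j : Fin ℓ, d j η with hY
  -- distinctness facts
  have hab : ∀ j j' : Fin ℓ, a j ≠ b j' := fun j j' h => by
    simpa using hinj (a₁ := Sum.inl j) (a₂ := Sum.inr j') h
  have haa : ∀ j j' : Fin ℓ, j ≠ j' → a j ≠ a j' := fun j j' hjj h =>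
    hjj (Sum.inl_injective (hinj (a₁ := Sum.inl j) (a₂ := Sum.inl j') h))
  have hbb : ∀ j j' : Fin ℓ, j ≠ j' → b j ≠ b j' := fun j j' hjj h =>
    hjj (Sum.inr_injective (hinj (a₁ := Sum.inr j) (a₂ := Sum.inr j') h))
  -- off-diagonal terms vanish
  have key : ∀ j j' : Fin ℓ, j ≠ j' → ∑ η ∈ S, d j η * d j' η = 0 := by
    intro j j' hjj
    have h1 : ∑ η ∈ S, (spin η (a j) - spin η (b j)) * spin η (a j') = 0 :=
      swap_sum_zero k (a j) (b j) (a j') (haa j' j hjj.symm) (hab j' j)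
    have h2 : ∑ η ∈ S, (spin η (a j) - spin η (b j)) * spin η (b j') = 0 :=
      swap_sum_zero k (a j) (b j) (b j') (Ne.symm (hab j j')) (hbb j' j hjj.symm)
    have hexp : ∀ η : α → Bool, d j η * d j' η =
        (spin η (a j) - spin η (b j)) * spin η (a j') -
        (spin η (a j) - spin η (b j)) * spin η (b j') := fun η => by
      simp only [hd]; ring
    rw [Finset.sum_congr rfl (fun η _ => hexp η), Finset.sum_sub_distrib, h1, h2, sub_zero]
  -- diagonal bound
  have diag : ∀ j : Fin ℓ, ∑ η ∈ S, (d j η) ^ 2 ≤ 4 * N := by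
    intro j
    have hterm : ∀ η ∈ S, (d j η) ^ 2 ≤ 4 := by
      intro η _
      simp only [hd]
      unfold spin
      split <;> split <;> norm_num
    calc ∑ η ∈ S, (d j η) ^ 2 ≤ ∑ η ∈ S, (4 : ℝ) := Finset.sum_le_sum hterm
      _ = 4 * N := by rw [Finset.sum_const, nsmul_eq_mul, hNdef, mul_comm]
  -- second moment bound
  have hsq : ∑ η ∈ S, (Y η) ^ 2 ≤ 4 * ℓ * N := by
    have e1 : ∑ η ∈ S, (Y η) ^ 2 =
        ∑ η ∈ S, ∑ j : Fin ℓ, ∑ j' : Fin ℓ, d j η * d j' η := by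
      refine Finset.sum_congr rfl fun η _ => ?_
      simp only [hY]
      rw [sq, Finset.sum_mul_sum]
    have e2 : ∑ η ∈ S, ∑ j : Fin ℓ, ∑ j' : Fin ℓ, d j η * d j' η =
        ∑ j : Fin ℓ, ∑ j' : Fin ℓ, ∑ η ∈ S, d j η * d j' η := by
      rw [Finset.sum_comm]
      exact Finset.sum_congr rfl fun j _ => Finset.sum_comm
    have e3 : ∀ j : Fin ℓ, ∑ j' : Fin ℓ, ∑ η ∈ S, d j η * d j' η =
        ∑ η ∈ S, (d j η) ^ 2 := by
      intro j
      rw [Finset.sum_eq_single j]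
      · exact Finset.sum_congr rfl fun η _ => (sq (d j η)).symm
      · intro j' _ hjj
        exact key j j' (Ne.symm hjj)
      · intro h; exact absurd (Finset.mem_univ j) h
    calc ∑ η ∈ S, (Y η) ^ 2 = ∑ j : Fin ℓ, ∑ η ∈ S, (d j η) ^ 2 := by
          rw [e1, e2]; exact Finset.sum_congr rfl fun j _ => e3 j
      _ ≤ ∑ _j : Fin ℓ, 4 * N := Finset.sum_le_sum fun j _ => diag j
      _ = 4 * ℓ * N := by
          rw [Finset.sum_const, Finset.card_univ, Fintype.card_fin, nsmul_eq_mul]; ring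
  -- Cauchy-Schwarz
  have habsY : (0 : ℝ) ≤ ∑ η ∈ S, |Y η| := Finset.sum_nonneg fun η _ => abs_nonneg _
  have hcs : (∑ η ∈ S, |Y η|) ^ 2 ≤ N * (4 * ℓ * N) := by
    have h := sq_sum_le_card_mul_sum_sq (s := S) (f := fun η => |Y η|)
    simp only [sq_abs] at h
    calc (∑ η ∈ S, |Y η|) ^ 2 ≤ (S.card : ℝ) * ∑ η ∈ S, (Y η) ^ 2 := h
      _ ≤ N * (4 * ℓ * N) := by
        rw [← hNdef]
        exact mul_le_mul_of_nonneg_left hsq hN.le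
  have hsum : ∑ η ∈ S, |Y η| ≤ 2 * Real.sqrt ℓ * N := by
    have hrhs : (0 : ℝ) ≤ 2 * Real.sqrt ℓ * N :=
      mul_nonneg (mul_nonneg (by norm_num) (Real.sqrt_nonneg _)) hN.le
    have hss : Real.sqrt ℓ ^ 2 = (ℓ : ℝ) := Real.sq_sqrt hℓR.le
    have h' : (∑ η ∈ S, |Y η|) ^ 2 ≤ (2 * Real.sqrt ℓ * N) ^ 2 := by nlinarith [hss, hcs]
    exact (abs_le_of_sq_le_sq' h' hrhs).2
  have hrw : ∀ η : α → Bool,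
      |(ℓ : ℝ)⁻¹ * ∑ j : Fin ℓ, (spin η (a j) - spin η (b j))| = (ℓ : ℝ)⁻¹ * |Y η| := by
    intro η
    rw [abs_mul, abs_inv, abs_of_nonneg hℓR.le]
  have h1 : N⁻¹ * ((ℓ : ℝ)⁻¹ * ∑ η ∈ S, |Y η|) ≤
      N⁻¹ * ((ℓ : ℝ)⁻¹ * (2 * Real.sqrt ℓ * N)) := by
    refine mul_le_mul_of_nonneg_left ?_ (inv_nonneg.2 hN.le)
    exact mul_le_mul_of_nonneg_left hsum (inv_nonneg.2 hℓR.le)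
  have h2 : N⁻¹ * ((ℓ : ℝ)⁻¹ * (2 * Real.sqrt ℓ * N)) = 2 * (Real.sqrt ℓ * (ℓ : ℝ)⁻¹) := by
    field_simp
  have h3 : Real.sqrt ℓ * (ℓ : ℝ)⁻¹ = (ℓ : ℝ) ^ (-(1 : ℝ) / 2) := by
    rw [show (-(1 : ℝ) / 2) = 1 / 2 + (-1) by norm_num, Real.rpow_add hℓR,
      Real.rpow_neg_one, ← Real.sqrt_eq_rpow]
  rw [h2, h3] at h1
  rw [Finset.sum_congr rfl fun η _ => hrw η, ← Finset.mul_sum]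
  exact h1
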